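/- For P(t) = t - a² with a ∈ ℂ*, the ring R_2(P) = ℂ[t,t⁻¹,u]/(u² - (t - a²)) is isomorphic as a ℂ-algebra to the localization ℂ[s, s⁻¹, (s+1)⁻¹]. -/

import Mathlib

open Polynomial

noncomputable section StmtAux

instance : IsScalarTower ℂ ℂ[X] (LaurentPolynomial ℂ) :=
  IsScalarTower.of_algebraMap_eq fun c => by
    simp [LaurentPolynomial.algebraMap_eq_toLaurent]

abbrev PLa : Type := Polynomial (LaurentPolynomial ℂ)

abbrev pgen (a : ℂ) : PLa :=
  (X : PLa) ^ 2 - C (Polynomial.toLaurent (X - Polynomial.C (a ^ 2)))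

abbrev RPa (a : ℂ) : Type := PLa ⧸ Ideal.span {pgen a}

instance (a : ℂ) : CommRing (RPa a) := inferInstance

abbrev LXa : Type := Localization.Away ((X * (X + 1)) : Polynomial ℂ)

def piR (a : ℂ) : PLa →ₐ[ℂ] RPa a := Ideal.Quotient.mkₐ ℂ _

def uu (a : ℂ) : RPa a := piR a X
def tt (a : ℂ) : RPa a := piR a (C (LaurentPolynomial.T 1))

lemma rel (a : ℂ) : uu a ^ 2 = tt a - algebraMap ℂ (RPa a) (a ^ 2) := by
  have h0 : piR a (pgen a) = 0 := by
    simp only [piR, Ideal.Quotient.mkₐ_eq_mk, Ideal.Quotient.eq_zero_iff_mem]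
    exact Ideal.subset_span rfl
  have h1 : pgen a = X ^ 2 - (C (LaurentPolynomial.T 1) -
      C (LaurentPolynomial.C (a ^ 2))) := by
    simp [pgen]
  have h0' : piR a (X ^ 2 - (C (LaurentPolynomial.T 1) -
      C (LaurentPolynomial.C (a ^ 2)))) = 0 := (congrArg (piR a) h1).symm.trans h0
  have h2 : algebraMap ℂ (RPa a) (a ^ 2) = piR a (C (LaurentPolynomial.C (a ^ 2))) := rfl
  rw [uu, tt, h2, ← map_pow, ← map_sub, ← map_sub, ← sub_eq_zero, ← map_sub]
  convert h0' using 2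
  rw [map_sub]

lemma isUnit_tt (a : ℂ) : IsUnit (tt a) := by
  have : IsUnit (C (LaurentPolynomial.T 1) : PLa) :=
    (LaurentPolynomial.isUnit_T (R := ℂ) 1).map (C : LaurentPolynomial ℂ →+* PLa)
  exact this.map (piR a)

/-! ### The map `Ψ : RPa a → LXa` -/

def ww : LXa := algebraMap ℂ[X] LXa X

def qq (a : ℂ) : LXa := algebraMap ℂ[X] LXa (Polynomial.C (-(4:ℂ)*a^2) * (X*(X+1)))

lemma isUnit_qq (a : ℂ) (ha : a ≠ 0) : IsUnit (qq a) := by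
  rw [qq, map_mul]
  apply IsUnit.mul
  · exact ((Polynomial.isUnit_C.mpr (isUnit_iff_ne_zero.mpr
      (by simp [ha] : (-(4:ℂ)*a^2) ≠ 0)))).map (algebraMap ℂ[X] LXa)
  · exact IsLocalization.Away.algebraMap_isUnit (S := LXa) (X*(X+1))

def gL (a : ℂ) (ha : a ≠ 0) : LaurentPolynomial ℂ →ₐ[ℂ] LXa := by
  haveI := LaurentPolynomial.isLocalization (R := ℂ)
  exact IsLocalization.liftAlgHom (M := Submonoid.powers (X : ℂ[X]))
    (f := Polynomial.aeval (R := ℂ) (qq a))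
    (fun y => by
      obtain ⟨n, hn⟩ := y.2
      have : (Polynomial.aeval (R := ℂ) (qq a)) (y : ℂ[X]) = qq a ^ n := by
        rw [← hn]; simp
      rw [this]
      exact (isUnit_qq a ha).pow n)

lemma gL_toLaurent (a : ℂ) (ha : a ≠ 0) (p : ℂ[X]) :
    gL a ha (Polynomial.toLaurent p) = Polynomial.aeval (qq a) p := by
  haveI := LaurentPolynomial.isLocalization (R := ℂ)
  exact IsLocalization.lift_eq _ p

def vv (a : ℂ) : LXa := algebraMap ℂ[X] LXa (Polynomial.C (Complex.I*a) * (2*X+1))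

def Psi0 (a : ℂ) (ha : a ≠ 0) : PLa →ₐ[ℂ] LXa :=
  Polynomial.eval₂AlgHom (gL a ha) (vv a) (fun _ => Commute.all _ _)

lemma Psi0_X (a : ℂ) (ha : a ≠ 0) : Psi0 a ha X = vv a := by
  simp [Psi0]

lemma Psi0_C (a : ℂ) (ha : a ≠ 0) (l : LaurentPolynomial ℂ) :
    Psi0 a ha (C l) = gL a ha l := by
  simp [Psi0]

lemma keypoly (a : ℂ) :
    (Polynomial.C (Complex.I*a) * (2*X+1))^2
      - (Polynomial.C (-(4:ℂ)*a^2) * (X*(X+1)) - Polynomial.C (a^2)) = (0 : ℂ[X]) := by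
  have hI : (Complex.I*a)^2 = -a^2 := by
    rw [mul_pow, Complex.I_sq]; ring
  rw [mul_pow, ← C_pow, hI]
  rw [← sub_eq_zero]
  ring_nf
  simp only [C_neg, C_mul, map_ofNat]
  ring

lemma Psi0_pgen (a : ℂ) (ha : a ≠ 0) : Psi0 a ha (pgen a) = 0 := by
  rw [pgen, map_sub, map_pow, Psi0_X, Psi0_C, gL_toLaurent]
  have h3 : (Polynomial.aeval (qq a)) (X - Polynomial.C (a ^ 2))
      = qq a - algebraMap ℂ LXa (a^2) := by simp
  rw [h3, vv, qq]
  have halg : algebraMap ℂ LXa (a^2) = algebraMap ℂ[X] LXa (Polynomial.C (a^2)) := by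
    rw [IsScalarTower.algebraMap_apply ℂ ℂ[X] LXa, Polynomial.algebraMap_eq]
  rw [halg, ← map_pow, ← map_sub, ← map_sub, keypoly a, map_zero]

def Psi (a : ℂ) (ha : a ≠ 0) : RPa a →ₐ[ℂ] LXa :=
  Ideal.Quotient.liftₐ _ (Psi0 a ha) (fun x hx => by
    obtain ⟨c, rfl⟩ := Ideal.mem_span_singleton'.mp hx
    rw [map_mul, Psi0_pgen, mul_zero])

lemma Psi_piR (a : ℂ) (ha : a ≠ 0) (p : PLa) : Psi a ha (piR a p) = Psi0 a ha p := by
  rw [Psi, piR, Ideal.Quotient.mkₐ_eq_mk, Ideal.Quotient.liftₐ_apply,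
    ]
  rfl

/-! ### The map `φ : LXa → RPa a` -/

def ss (a : ℂ) : RPa a :=
  algebraMap ℂ (RPa a) ((2*Complex.I*a)⁻¹) * uu a + algebraMap ℂ (RPa a) (-(1/2))

lemma hnum1 (a : ℂ) (ha : a ≠ 0) : ((2*Complex.I*a)⁻¹^2 * a^2 : ℂ) = -(1/4) := by
  have h2 : (2*Complex.I*a) ≠ 0 := by
    simp [Complex.I_ne_zero, ha]
  field_simp
  rw [Complex.I_sq]
  ring

lemma ss_key (a : ℂ) :
    ss a * (ss a + 1) = algebraMap ℂ (RPa a) ((2*Complex.I*a)⁻¹^2) * uu a ^ 2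
      + algebraMap ℂ (RPa a) (-(1/4)) := by
  set K := algebraMap ℂ (RPa a)
  have e1 : K ((2*Complex.I*a)⁻¹^2) = K ((2*Complex.I*a)⁻¹) * K ((2*Complex.I*a)⁻¹) := by
    rw [← map_mul, sq]
  have e2 : K (-(1/4:ℂ)) = K (-(1/2)) * K (-(1/2)) + K (-(1/2)) := by
    rw [← map_mul, ← map_add]; norm_num
  have e3 : K (-(1/2:ℂ)) + K (-(1/2:ℂ)) + 1 = 0 := by
    rw [← map_add, ← map_one K, ← map_add, ← map_zero K]; norm_num
  rw [ss, e1, e2]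
  linear_combination (K ((2*Complex.I*a)⁻¹) * uu a) * e3

lemma ss_rel (a : ℂ) (ha : a ≠ 0) :
    ss a * (ss a + 1) = algebraMap ℂ (RPa a) ((2*Complex.I*a)⁻¹^2) * tt a := by
  set K := algebraMap ℂ (RPa a)
  have e4 : K ((2*Complex.I*a)⁻¹^2) * K (a^2) = K (-(1/4 : ℂ)) := by
    rw [← map_mul, hnum1 a ha]
  rw [ss_key a, rel a]
  linear_combination -e4

lemma isUnit_ss (a : ℂ) (ha : a ≠ 0) : IsUnit (ss a * (ss a + 1)) := by
  rw [ss_rel a ha]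
  apply IsUnit.mul
  · apply IsUnit.map
    apply isUnit_iff_ne_zero.mpr
    have h2 : (2*Complex.I*a) ≠ 0 := by simp [Complex.I_ne_zero, ha]
    exact pow_ne_zero 2 (inv_ne_zero h2)
  · exact isUnit_tt a

def phi (a : ℂ) (ha : a ≠ 0) : LXa →ₐ[ℂ] RPa a :=
  IsLocalization.liftAlgHom (M := Submonoid.powers ((X*(X+1)) : ℂ[X]))
    (f := Polynomial.aeval (R := ℂ) (ss a))
    (fun y => by
      obtain ⟨n, hn⟩ := y.2
      have : (Polynomial.aeval (R := ℂ) (ss a)) (y : ℂ[X]) = (ss a * (ss a + 1)) ^ n := by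
        rw [← hn]; simp
      rw [this]
      exact (isUnit_ss a ha).pow n)

lemma phi_algebraMap (a : ℂ) (ha : a ≠ 0) (p : ℂ[X]) :
    phi a ha (algebraMap ℂ[X] LXa p) = Polynomial.aeval (ss a) p :=
  IsLocalization.lift_eq _ p


/-! ### Extensionality helpers -/

lemma laurent_algHom_ext {B : Type} [CommRing B] [Algebra ℂ B]
    {f g : LaurentPolynomial ℂ →ₐ[ℂ] B}
    (h : f (LaurentPolynomial.T 1) = g (LaurentPolynomial.T 1)) : f = g := by
  haveI := LaurentPolynomial.isLocalization (R := ℂ)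
  apply AlgHom.coe_ringHom_injective
  apply IsLocalization.ringHom_ext (Submonoid.powers (X : ℂ[X]))
  apply Polynomial.ringHom_ext
  · intro c
    show f (Polynomial.toLaurent (Polynomial.C c)) = g (Polynomial.toLaurent (Polynomial.C c))
    have hc : Polynomial.toLaurent (Polynomial.C c) = algebraMap ℂ (LaurentPolynomial ℂ) c := by
      simp
    rw [hc, AlgHom.commutes, AlgHom.commutes]
  · show f (Polynomial.toLaurent X) = g (Polynomial.toLaurent X)
    rw [Polynomial.toLaurent_X]
    exact h

lemma lxa_algHom_ext {B : Type} [CommRing B] [Algebra ℂ B]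
    {f g : LXa →ₐ[ℂ] B}
    (h : f (algebraMap ℂ[X] LXa X) = g (algebraMap ℂ[X] LXa X)) : f = g := by
  apply AlgHom.coe_ringHom_injective
  apply IsLocalization.ringHom_ext (Submonoid.powers ((X*(X+1)) : ℂ[X]))
  apply Polynomial.ringHom_ext
  · intro c
    show f (algebraMap ℂ[X] LXa (Polynomial.C c)) = g (algebraMap ℂ[X] LXa (Polynomial.C c))
    have hc : algebraMap ℂ[X] LXa (Polynomial.C c) = algebraMap ℂ LXa c := by
      rw [IsScalarTower.algebraMap_apply ℂ ℂ[X] LXa, Polynomial.algebraMap_eq]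
    rw [hc, AlgHom.commutes, AlgHom.commutes]
  · exact h

/-! ### Round trips -/

lemma Psi_uu (a : ℂ) (ha : a ≠ 0) : Psi a ha (uu a) = vv a := by
  rw [uu, Psi_piR, Psi0_X]

lemma Psi_tt (a : ℂ) (ha : a ≠ 0) : Psi a ha (tt a) = qq a := by
  rw [tt, Psi_piR, Psi0_C, ← Polynomial.toLaurent_X, gL_toLaurent, Polynomial.aeval_X]

lemma phi_vv (a : ℂ) (ha : a ≠ 0) : phi a ha (vv a) = uu a := by
  rw [vv, phi_algebraMap]
  simp only [map_mul, map_add, map_one, map_ofNat, Polynomial.aeval_C, Polynomial.aeval_X]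
  set K := algebraMap ℂ (RPa a) with hKdef
  have h2 : (2*Complex.I*a) ≠ 0 := by simp [Complex.I_ne_zero, ha]
  have e3 : K (-(1/2:ℂ)) + K (-(1/2:ℂ)) + 1 = 0 := by
    rw [← map_add, ← map_one K, ← map_add, ← map_zero K]; norm_num
  have h3 : K Complex.I * K a * (K ((2*Complex.I*a)⁻¹) + K ((2*Complex.I*a)⁻¹)) = 1 := by
    rw [← map_add, ← map_mul, ← map_mul, ← map_one K]
    congr 1
    field_simp
    ring
  rw [ss]
  linear_combination uu a * h3 + (K Complex.I * K a) * e3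

lemma phi_qq (a : ℂ) (ha : a ≠ 0) : phi a ha (qq a) = tt a := by
  rw [qq, phi_algebraMap]
  simp only [map_mul, map_add, map_one, Polynomial.aeval_C, Polynomial.aeval_X]
  set K := algebraMap ℂ (RPa a) with hKdef
  have hr := ss_rel a ha
  have hnum2 : (-(4:ℂ)*a^2) * ((2*Complex.I*a)⁻¹^2) = 1 := by
    have h2 : (2*Complex.I*a) ≠ 0 := by simp [Complex.I_ne_zero, ha]
    field_simp
    rw [Complex.I_sq]
    ring
  have e6 : K (-(4:ℂ)*a^2) * K ((2*Complex.I*a)⁻¹^2) = 1 := by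
    rw [← map_mul, ← map_one K]
    exact congrArg K hnum2
  have e7 : K (-(4:ℂ)*a^2) = K (-4) * K (a^2) := by rw [← map_mul]
  linear_combination (K (-4) * K (a^2)) * hr + (tt a) * e6 - (tt a) * K ((2*Complex.I*a)⁻¹^2) * e7

lemma phi_Psi (a : ℂ) (ha : a ≠ 0) :
    (phi a ha).comp (Psi a ha) = AlgHom.id ℂ (RPa a) := by
  apply Ideal.Quotient.algHom_ext
  apply Polynomial.algHom_ext'
  · apply laurent_algHom_ext
    show phi a ha (Psi a ha (tt a)) = tt a
    rw [Psi_tt a ha, phi_qq a ha]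
  · show phi a ha (Psi a ha (uu a)) = uu a
    rw [Psi_uu a ha, phi_vv a ha]

lemma Psi_phi (a : ℂ) (ha : a ≠ 0) :
    (Psi a ha).comp (phi a ha) = AlgHom.id ℂ LXa := by
  apply lxa_algHom_ext
  show Psi a ha (phi a ha (algebraMap ℂ[X] LXa X)) = algebraMap ℂ[X] LXa X
  rw [phi_algebraMap, Polynomial.aeval_X, ss, map_add, map_mul,
    AlgHom.commutes, AlgHom.commutes, Psi_uu a ha, vv]
  set m := algebraMap ℂ[X] LXa X with hm
  set K := algebraMap ℂ LXa with hK
  have hCc : ∀ c : ℂ, algebraMap ℂ[X] LXa (Polynomial.C c) = K c := fun c => by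
    rw [hK, IsScalarTower.algebraMap_apply ℂ ℂ[X] LXa, Polynomial.algebraMap_eq]
  simp only [map_mul, map_add, map_one, map_ofNat, hCc]
  have h2 : (2*Complex.I*a) ≠ 0 := by simp [Complex.I_ne_zero, ha]
  have e5 : K ((2*Complex.I*a)⁻¹) * (K Complex.I * K a) + K (-(1/2:ℂ)) = 0 := by
    rw [← map_mul, ← map_mul, ← map_add, ← map_zero K]
    congr 1
    field_simp
    ring
  have e3 : K (-(1/2:ℂ)) + K (-(1/2:ℂ)) + 1 = 0 := by
    rw [← map_add, ← map_one K, ← map_add, ← map_zero K]; norm_num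
  linear_combination ((2:LXa)*m + 1) * e5 - m * e3

end StmtAux

/-- For `P(t) = t - a²` with `a ≠ 0`, `R_2(P)` is isomorphic as a ℂ-algebra to
`ℂ[s, s⁻¹, (s+1)⁻¹]`, realized as the localization of `ℂ[s]` away from `s(s+1)`. -/
theorem stmt_6 (a : ℂ) (ha : a ≠ 0) :
    Nonempty
      ((Polynomial (LaurentPolynomial ℂ) ⧸
          Ideal.span {(X : Polynomial (LaurentPolynomial ℂ)) ^ 2 -
            C (Polynomial.toLaurent (X - C (a ^ 2)))}) ≃ₐ[ℂ]
        Localization.Away ((X * (X + 1)) : Polynomial ℂ)) :=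
  ⟨AlgEquiv.ofAlgHom (Psi a ha) (phi a ha)
    (Psi_phi a ha) (phi_Psi a ha)⟩
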